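/- Let F be a finite index set and let {a_j}_{j∈F} be pairwise orthogonal nonzero vectors in ℂ^N (a_jᴴ a_i = 0 for i ≠ j in F), let {b_j}_{j∈F} ⊆ ℂ, and let x ∈ ℂ^N. For each j ∈ F set r_j = b_j − a_jᴴ x and φ_j = r_j/‖a_j‖₂², and assume not all r_j are zero. Let d = Σ_{j∈F} φ_j·a_j and c = Σ_{j∈F} conj(φ_j)·r_j, and define the aggregation-hyperplane update x' = x + (c/‖d‖₂²)·d. Then a_jᴴ x' = b_j for every j ∈ F; i.e., one aggregation step solves all equations indexed by F simultaneously. -/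
import Mathlib

open scoped BigOperators

noncomputable section

/-- Hermitian inner product aᴴb = ∑ conj(aₙ)·bₙ on complex vectors. -/
def hIP {ι : Type*} [Fintype ι] (a y : ι → ℂ) : ℂ := ∑ n, (starRingEnd ℂ) (a n) * y n

/-- Squared Euclidean norm of a complex vector. -/
def sqNorm {ι : Type*} [Fintype ι] (a : ι → ℂ) : ℝ := ∑ n, Complex.normSq (a n)

lemma hIP_add {ι : Type*} [Fintype ι] (a y z : ι → ℂ) :
    hIP a (y + z) = hIP a y + hIP a z := by
  simp [hIP, mul_add, Finset.sum_add_distrib]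

lemma hIP_smul {ι : Type*} [Fintype ι] (a y : ι → ℂ) (t : ℂ) :
    hIP a (t • y) = t * hIP a y := by
  simp only [hIP, Pi.smul_apply, smul_eq_mul, Finset.mul_sum]
  exact Finset.sum_congr rfl fun n _ => by ring

lemma hIP_sum {ι κ : Type*} [Fintype ι] [Fintype κ] (a : ι → ℂ) (f : κ → ι → ℂ) :
    hIP a (∑ k, f k) = ∑ k, hIP a (f k) := by
  simp only [hIP]
  rw [Finset.sum_comm]
  refine Finset.sum_congr rfl fun n _ => ?_
  simp [Finset.mul_sum]

lemma hIP_smul_left {ι : Type*} [Fintype ι] (a y : ι → ℂ) (t : ℂ) :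
    hIP (t • a) y = (starRingEnd ℂ) t * hIP a y := by
  simp only [hIP, Pi.smul_apply, smul_eq_mul, map_mul, Finset.mul_sum]
  exact Finset.sum_congr rfl fun n _ => by ring

lemma hIP_sum_left {ι κ : Type*} [Fintype ι] [Fintype κ] (f : κ → ι → ℂ) (y : ι → ℂ) :
    hIP (∑ k, f k) y = ∑ k, hIP (f k) y := by
  simp only [hIP]
  rw [Finset.sum_comm]
  refine Finset.sum_congr rfl fun n _ => ?_
  simp [Finset.sum_mul, map_sum]

lemma hIP_self {ι : Type*} [Fintype ι] (a : ι → ℂ) :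
    hIP a a = (sqNorm a : ℂ) := by
  simp only [hIP, sqNorm, Complex.ofReal_sum]
  exact Finset.sum_congr rfl fun n _ => by
    rw [Complex.normSq_eq_conj_mul_self]

lemma sqNorm_ne_zero {ι : Type*} [Fintype ι] (a : ι → ℂ) (h : a ≠ 0) :
    sqNorm a ≠ 0 := by
  intro h0
  apply h
  funext n
  have := (Finset.sum_eq_zero_iff_of_nonneg
    (fun i _ => Complex.normSq_nonneg (a i))).mp h0 n (Finset.mem_univ n)
  exact Complex.normSq_eq_zero.mp this

/-- Theorem 4 of the paper: one aggregation-hyperplane Kaczmarz step over a pairwise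
orthogonal family F solves all equations indexed by F simultaneously. -/
theorem ahk_orthogonal_solves_all (N : ℕ) (ι : Type) [Fintype ι]
    (a : ι → Fin N → ℂ) (ha : ∀ j, a j ≠ 0)
    (horth : ∀ i j : ι, i ≠ j → hIP (a j) (a i) = 0)
    (b : ι → ℂ) (x : Fin N → ℂ)
    (r φ : ι → ℂ)
    (hr : ∀ j, r j = b j - hIP (a j) x)
    (hφ : ∀ j, φ j = r j / (sqNorm (a j) : ℂ))
    (hr0 : ∃ j, r j ≠ 0)
    (d : Fin N → ℂ) (hd : d = ∑ j, φ j • a j)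
    (c : ℂ) (hc : c = ∑ j, (starRingEnd ℂ) (φ j) * r j)
    (x' : Fin N → ℂ) (hx' : x' = x + (c / (sqNorm d : ℂ)) • d) :
    ∀ j : ι, hIP (a j) x' = b j := by
  have hs : ∀ j, (sqNorm (a j) : ℂ) ≠ 0 := fun j => by
    exact_mod_cast Complex.ofReal_ne_zero.mpr (sqNorm_ne_zero _ (ha j))
  have hrφ : ∀ j, r j = φ j * (sqNorm (a j) : ℂ) := fun j => by
    rw [hφ j, div_mul_cancel₀ _ (hs j)]
  -- hIP (a j) d
  have hjd : ∀ j, hIP (a j) d = r j := by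
    intro j
    rw [hd, hIP_sum]
    rw [Finset.sum_eq_single j]
    · rw [hIP_smul, hIP_self, ← hrφ]
    · intro i _ hij
      rw [hIP_smul, horth i j hij, mul_zero]
    · intro h; exact absurd (Finset.mem_univ j) h
  -- hIP d d = c
  have hdd : hIP d d = c := by
    conv_lhs => rw [hd]
    rw [hIP_sum_left, hc]
    refine Finset.sum_congr rfl fun i _ => ?_
    rw [hIP_smul_left, ← hd, hjd i]
  -- d ≠ 0
  obtain ⟨j0, hj0⟩ := hr0
  have hdne : d ≠ 0 := by
    intro h0
    apply hj0
    rw [← hjd j0, h0]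
    simp [hIP]
  have hsd : (sqNorm d : ℂ) ≠ 0 :=
    Complex.ofReal_ne_zero.mpr (sqNorm_ne_zero _ hdne)
  have hceq : c = (sqNorm d : ℂ) := by rw [← hdd, hIP_self]
  intro j
  rw [hx', hIP_add, hIP_smul, hjd j, hceq, div_self hsd, one_mul, hr j]
  ring
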